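/- Let Ω ⊆ ℂ³ be open and σ : Ω → ℂ analytic, and define on {u ∈ Ω : σ(u) ≠ 0} the function Δ := ℘₁₁℘₃₃ − ℘₁₂℘₂₃ − ℘₁₃² + ℘₁₃℘₂₂. Then there exists an analytic function G : Ω → ℂ such that σ(u)³·Δ(u) = G(u) for all u ∈ Ω with σ(u) ≠ 0; that is, Δ has poles of order at most 3 along the zero set of σ, even though each of its individual terms has poles of order 4. -/
import Mathlib


/-- Partial derivative in the `i`-th coordinate direction of a function on `ℂ³`. -/
noncomputable def pd (i : Fin 3) (f : (Fin 3 → ℂ) → ℂ) : (Fin 3 → ℂ) → ℂ :=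
  fun u => fderiv ℂ f u (Pi.single i 1)

/-- The 2-index Kleinian ℘-function `℘_{ij} = −∂ᵢ∂ⱼ log σ`, written out as
`(∂ᵢσ·∂ⱼσ − σ·∂ᵢ∂ⱼσ)/σ²`. -/
noncomputable def wp2 (σ : (Fin 3 → ℂ) → ℂ) (i j : Fin 3) : (Fin 3 → ℂ) → ℂ :=
  fun u => (pd i σ u * pd j σ u - σ u * pd i (pd j σ) u) / (σ u) ^ 2

/-- Baker's genus-three function `Δ = ℘₁₁℘₃₃ − ℘₁₂℘₂₃ − ℘₁₃² + ℘₁₃℘₂₂`. -/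
noncomputable def Delta (σ : (Fin 3 → ℂ) → ℂ) : (Fin 3 → ℂ) → ℂ :=
  fun u => wp2 σ 0 0 u * wp2 σ 2 2 u - wp2 σ 0 1 u * wp2 σ 1 2 u
    - (wp2 σ 0 2 u) ^ 2 + wp2 σ 0 2 u * wp2 σ 1 1 u

lemma pd_analytic {Ω : Set (Fin 3 → ℂ)} (hΩ : IsOpen Ω) {f : (Fin 3 → ℂ) → ℂ}
    (hf : AnalyticOnNhd ℂ f Ω) (i : Fin 3) : AnalyticOnNhd ℂ (pd i f) Ω := by
  have h1 : AnalyticOnNhd ℂ (fderiv ℂ f) Ω := hf.fderiv_of_isOpen hΩ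
  have h2 := (ContinuousLinearMap.apply ℂ ℂ (Pi.single i 1 : Fin 3 → ℂ)).comp_analyticOnNhd h1
  exact h2

/-- For `σ` analytic on an open `Ω ⊆ ℂ³`, there is a function `G` analytic on
all of `Ω` with `σ³·Δ = G` on `{σ ≠ 0}`: the function
`Δ = ℘₁₁℘₃₃ − ℘₁₂℘₂₃ − ℘₁₃² + ℘₁₃℘₂₂` has poles of order at most 3 along the
zero set of `σ`, even though each of its terms has poles of order 4. -/
theorem stmt4 (Ω : Set (Fin 3 → ℂ)) (hΩopen : IsOpen Ω)
    (σ : (Fin 3 → ℂ) → ℂ) (hσ : AnalyticOnNhd ℂ σ Ω) :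
    ∃ G : (Fin 3 → ℂ) → ℂ, AnalyticOnNhd ℂ G Ω ∧
      ∀ u ∈ Ω, σ u ≠ 0 → (σ u) ^ 3 * Delta σ u = G u := by
  set d : Fin 3 → (Fin 3 → ℂ) → ℂ := fun i => pd i σ with hd
  set dd : Fin 3 → Fin 3 → (Fin 3 → ℂ) → ℂ := fun i j => pd i (pd j σ) with hdd
  refine ⟨fun u =>
      -(d 0 u)^2 * dd 2 2 u - (d 2 u)^2 * dd 0 0 u + σ u * dd 0 0 u * dd 2 2 u
      + d 0 u * d 1 u * dd 1 2 u + d 1 u * d 2 u * dd 0 1 u - σ u * dd 0 1 u * dd 1 2 u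
      + 2 * d 0 u * d 2 u * dd 0 2 u - σ u * (dd 0 2 u)^2
      - d 0 u * d 2 u * dd 1 1 u - (d 1 u)^2 * dd 0 2 u + σ u * dd 0 2 u * dd 1 1 u,
    ?_, ?_⟩
  · have hdA : ∀ i, AnalyticOnNhd ℂ (d i) Ω := fun i => pd_analytic hΩopen hσ i
    have hddA : ∀ i j, AnalyticOnNhd ℂ (dd i j) Ω := fun i j =>
      pd_analytic hΩopen (pd_analytic hΩopen hσ j) i
    refine ((((((((((((((hdA 0).pow 2).neg.mul (hddA 2 2)).sub
      (((hdA 2).pow 2).mul (hddA 0 0))).add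
      ((hσ.mul (hddA 0 0)).mul (hddA 2 2))).add
      (((hdA 0).mul (hdA 1)).mul (hddA 1 2))).add
      (((hdA 1).mul (hdA 2)).mul (hddA 0 1))).sub
      ((hσ.mul (hddA 0 1)).mul (hddA 1 2))).add
      (((analyticOnNhd_const.mul (hdA 0)).mul (hdA 2)).mul (hddA 0 2))).sub
      (hσ.mul ((hddA 0 2).pow 2))).sub
      (((hdA 0).mul (hdA 2)).mul (hddA 1 1))).sub
      (((hdA 1).pow 2).mul (hddA 0 2))).add
      ((hσ.mul (hddA 0 2)).mul (hddA 1 1))))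
  · intro u hu h0
    have h2 : (σ u) ^ 2 ≠ 0 := pow_ne_zero 2 h0
    simp only [Delta, wp2, ← hd, ← hdd]
    field_simp
    ring
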